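/- arXiv:2203.13174 — 4 statements merged into one kernel-verified Lean document; each statement's English description precedes it below -/
import Mathlib

section
/- Let m, n, r be natural numbers, M an m × n real matrix of rank at least r, u ∈ ℝ^m, and A a finite nonempty set of real numbers. Then the number of vectors a ∈ A^n with M aᵀ = uᵀ is at most |A|^{n - r}. -/
open Finset

lemma key_coords (n : ℕ) (K : Submodule ℝ (Fin n → ℝ)) :
    ∃ t : Finset (Fin n), t.card ≤ Module.finrank ℝ K ∧
      ∀ x ∈ K, (∀ i ∈ t, x i = 0) → x = 0 := by
  classical
  set φ : Fin n → Module.Dual ℝ K := fun i => (LinearMap.proj i).comp K.subtype with hφ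
  have hspan : Submodule.span ℝ (Set.range φ) = ⊤ := by
    apply Submodule.span_eq_top_of_ne_zero
    intro z hz
    have : (z : Fin n → ℝ) ≠ 0 := fun h => hz (Subtype.ext h)
    obtain ⟨i, hi⟩ := Function.ne_iff.mp this
    exact ⟨φ i, Set.mem_range_self i, hi⟩
  obtain ⟨b, hb_sub, hb_span, hb_ind⟩ := exists_linearIndependent ℝ (Set.range φ)
  have hb_fin : b.Finite := hb_ind.setFinite
  have : Fintype b := hb_fin.fintype
  have hb_card : hb_fin.toFinset.card ≤ Module.finrank ℝ (Module.Dual ℝ K) := by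
    rw [Set.Finite.card_toFinset]
    exact hb_ind.fintype_card_le_finrank
  -- choose preimage indices
  have hchoice : ∀ y ∈ b, ∃ i : Fin n, φ i = y := fun y hy => hb_sub hy
  choose f hf using hchoice
  refine ⟨hb_fin.toFinset.attach.image (fun y => f y.1 (hb_fin.mem_toFinset.mp y.2)), ?_, ?_⟩
  · calc _ ≤ hb_fin.toFinset.attach.card := Finset.card_image_le
      _ = hb_fin.toFinset.card := Finset.card_attach
      _ ≤ Module.finrank ℝ (Module.Dual ℝ K) := hb_card
      _ = Module.finrank ℝ K := Subspace.dual_finrank_eq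
  · intro x hx h0
    have hvanish : ∀ g ∈ b, g (⟨x, hx⟩ : K) = 0 := by
      intro g hg
      have hmem : f g hg ∈ hb_fin.toFinset.attach.image
          (fun y => f y.1 (hb_fin.mem_toFinset.mp y.2)) := by
        refine Finset.mem_image.mpr ⟨⟨g, hb_fin.mem_toFinset.mpr hg⟩, Finset.mem_attach _ _, rfl⟩
      have := h0 _ hmem
      rw [← hf g hg]
      simpa [hφ] using this
    have hall : ∀ g : Module.Dual ℝ K, g (⟨x, hx⟩ : K) = 0 := by
      intro g
      have hg : g ∈ Submodule.span ℝ b := by rw [hb_span, hspan]; trivial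
      induction hg using Submodule.span_induction with
      | mem g hg => exact hvanish g hg
      | zero => simp
      | add g₁ g₂ _ _ h1 h2 => simp [h1, h2]
      | smul c g _ h => simp [h]
    have : (⟨x, hx⟩ : K) = 0 := (Module.forall_dual_apply_eq_zero_iff ℝ _).mp hall
    simpa using congrArg Subtype.val this

/-- if `M` is an `m × n` real matrix of rank at least `r`, `u ∈ ℝ^m`,
and `A` is a finite nonempty set of reals, then the number of vectors `a ∈ A^n` with
`M aᵀ = uᵀ` is at most `|A|^{n-r}`. -/
theorem stmt6 (m n r : ℕ) (M : Matrix (Fin m) (Fin n) ℝ) (hr : r ≤ M.rank)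
    (u : Fin m → ℝ) (A : Finset ℝ) (hA : A.Nonempty) :
    (((Fintype.piFinset fun _ : Fin n => A).filter fun a => M.mulVec a = u).card : ℕ) ≤
      A.card ^ (n - r) := by
  classical
  set K := LinearMap.ker M.mulVecLin with hK
  have hrank : M.rank + Module.finrank ℝ K = n := by
    have := LinearMap.finrank_range_add_finrank_ker M.mulVecLin
    simpa [Matrix.rank, hK] using this
  have hdim : Module.finrank ℝ K ≤ n - r := by omega
  obtain ⟨t, htcard, ht⟩ := key_coords n K
  have htcard' : t.card ≤ n - r := htcard.trans hdim
  calc ((Fintype.piFinset fun _ : Fin n => A).filter fun a => M.mulVec a = u).card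
      ≤ (Fintype.piFinset fun _ : (t : Finset (Fin n)) => A).card := by
        apply Finset.card_le_card_of_injOn (fun a => fun i : t => a i)
        · intro a ha
          simp only [Finset.mem_coe, Finset.mem_filter, Fintype.mem_piFinset] at ha ⊢
          exact fun i => ha.1 i
        · intro a ha b hb hab
          simp only [Finset.coe_filter, Set.mem_setOf_eq, Fintype.mem_piFinset] at ha hb
          have hsub : a - b ∈ K := by
            rw [hK, LinearMap.mem_ker, map_sub]
            simp only [Matrix.mulVecLin_apply, ha.2, hb.2, sub_self]
          have hz : ∀ i ∈ t, (a - b) i = 0 := by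
            intro i hi
            have := congrFun hab ⟨i, hi⟩
            simp only [Pi.sub_apply]
            simpa [sub_eq_zero] using this
          have := ht _ hsub hz
          exact sub_eq_zero.mp this
    _ = A.card ^ t.card := by
        rw [Fintype.card_piFinset]
        simp [Finset.prod_const]
    _ ≤ A.card ^ (n - r) := Nat.pow_le_pow_right hA.card_pos htcard'
end

section
/- Let h ≥ 2 and let P, Q be disjoint finite sets of prime numbers. Let C ⊆ {pq : p ∈ P, q ∈ Q} be a set such that every integer has at most one representation as a product of h elements of C (counted up to ordering). Construct the bipartite graph G on P ∪ Q where p ∈ P is joined to q ∈ Q whenever pq ∈ C. Then G contains no cycle of length 2h. -/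
open Finset

lemma walk_support_getElem? {V : Type*} {G : SimpleGraph V} {u v : V} (p : G.Walk u v) :
    ∀ i, i ≤ p.length → p.support[i]? = some (p.getVert i) := by
  induction p with
  | nil => intro i hi; simp at hi; subst hi; simp [SimpleGraph.Walk.getVert]
  | cons hadj p ih =>
    intro i hi
    cases i with
    | zero => simp
    | succ n =>
      simp only [SimpleGraph.Walk.support_cons, SimpleGraph.Walk.getVert_cons_succ]
      rw [List.getElem?_cons_succ]
      exact ih n (by simpa using hi)

lemma prime_mul_eq {P Q : Finset ℕ} (hP : ∀ p ∈ P, Nat.Prime p) (hQ : ∀ q ∈ Q, Nat.Prime q)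
    (hPQ : Disjoint P Q) {p p' q q' : ℕ} (hp : p ∈ P) (hp' : p' ∈ P) (hq : q ∈ Q) (hq' : q' ∈ Q)
    (heq : p * q = p' * q') : p = p' ∧ q = q' := by
  have hpp := hP p hp
  have hpp' := hP p' hp'
  have hqq := hQ q hq
  have hqq' := hQ q' hq'
  have hdvd : p ∣ p' * q' := heq ▸ ⟨q, rfl⟩
  have : p = p' := by
    rcases (Nat.Prime.dvd_mul hpp).mp hdvd with h1 | h1
    · exact ((Nat.prime_dvd_prime_iff_eq hpp hpp').mp h1)
    · exfalso
      have : p = q' := (Nat.prime_dvd_prime_iff_eq hpp hqq').mp h1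
      exact Finset.disjoint_left.mp hPQ hp (this ▸ hq')
  subst this
  exact ⟨rfl, Nat.eq_of_mul_eq_mul_left hpp.pos heq⟩

lemma prod_pair_range (f : ℕ → ℕ) (n : ℕ) :
    ∏ i ∈ Finset.range n, (f (2*i) * f (2*i+1)) = ∏ i ∈ Finset.range (2*n), f i := by
  induction n with
  | zero => simp
  | succ n ih =>
    rw [Finset.prod_range_succ, ih, show 2*(n+1) = 2*n+1+1 by ring,
      Finset.prod_range_succ, Finset.prod_range_succ]
    ring

lemma key (h : ℕ) (hh : 2 ≤ h) (P Q : Finset ℕ)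
    (hP : ∀ p ∈ P, Nat.Prime p) (hQ : ∀ q ∈ Q, Nat.Prime q) (hPQ : Disjoint P Q)
    (C : Finset ℕ)
    (hSidon : ∀ n : ℕ, ∀ m₁ m₂ : Multiset ℕ,
      Multiset.card m₁ = h → (∀ x ∈ m₁, x ∈ C) → m₁.prod = n →
      Multiset.card m₂ = h → (∀ x ∈ m₂, x ∈ C) → m₂.prod = n → m₁ = m₂)
    (G : SimpleGraph ℕ)
    (hG : ∀ a b : ℕ, G.Adj a b ↔
      (a ∈ P ∧ b ∈ Q ∧ a * b ∈ C) ∨ (b ∈ P ∧ a ∈ Q ∧ b * a ∈ C))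
    (v : ℕ) (w : G.Walk v v) (hcyc : w.IsCycle) (hlen : w.length = 2 * h)
    (hv : v ∈ P) : False := by
  set f : ℕ → ℕ := w.getVert with hf
  have f0 : f 0 = v := w.getVert_zero
  have f2h : f (2*h) = v := by rw [← hlen]; exact w.getVert_length
  have notPQ : ∀ x, x ∈ P → x ∈ Q → False := fun x hx hy =>
    Finset.disjoint_left.mp hPQ hx hy
  -- alternation
  have hPar : ∀ i, i ≤ 2*h → (Even i → f i ∈ P) ∧ (¬ Even i → f i ∈ Q) := by
    intro i
    induction i with
    | zero => intro _; exact ⟨fun _ => f0 ▸ hv, fun hc => absurd Even.zero hc⟩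
    | succ i ih =>
      intro hi
      obtain ⟨hp, hq⟩ := ih (by omega)
      have hadj := w.adj_getVert_succ (i := i) (by omega)
      rw [hG] at hadj
      by_cases he : Even i
      · refine ⟨fun hc => absurd he (by simpa [Nat.even_add_one] using hc), fun _ => ?_⟩
        rcases hadj with ⟨_, h2, _⟩ | ⟨_, h2, _⟩
        · exact h2
        · exact absurd (hp he) (fun hx => notPQ _ hx h2)
      · refine ⟨fun _ => ?_, fun hc => absurd (Nat.even_add_one.mpr he) hc⟩
        rcases hadj with ⟨h1, _, _⟩ | ⟨h1, _, _⟩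
        · exact absurd h1 (fun hx => notPQ _ hx (hq he))
        · exact h1
  -- edge products in C
  have hCe : ∀ i, i < h → f (2*i) * f (2*i+1) ∈ C := by
    intro i hi
    have hadj := w.adj_getVert_succ (i := 2*i) (by omega)
    rw [hG] at hadj
    rcases hadj with ⟨_, _, h3⟩ | ⟨_, h2, _⟩
    · exact h3
    · exact absurd ((hPar (2*i) (by omega)).1 ⟨i, by ring⟩) (fun hx => notPQ _ hx h2)
  have hCo : ∀ i, i < h → f (2*i+2) * f (2*i+1) ∈ C := by
    intro i hi
    have hadj := w.adj_getVert_succ (i := 2*i+1) (by omega)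
    rw [hG] at hadj
    rcases hadj with ⟨h1, _, _⟩ | ⟨_, _, h3⟩
    · exact absurd h1 (fun hx =>
        notPQ _ hx ((hPar (2*i+1) (by omega)).2 (by simp [Nat.even_add_one, parity_simps])))
    · exact h3
  -- the two multisets
  set m₁ : Multiset ℕ := (Finset.range h).val.map (fun i => f (2*i) * f (2*i+1)) with hm₁
  set m₂ : Multiset ℕ := (Finset.range h).val.map (fun i => f (2*i+2) * f (2*i+1)) with hm₂
  have hcard₁ : Multiset.card m₁ = h := by simp [hm₁]
  have hcard₂ : Multiset.card m₂ = h := by simp [hm₂]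
  have hmem₁ : ∀ x ∈ m₁, x ∈ C := by
    intro x hx
    rw [hm₁, Multiset.mem_map] at hx
    obtain ⟨i, hi, rfl⟩ := hx
    exact hCe i (by simpa using hi)
  have hmem₂ : ∀ x ∈ m₂, x ∈ C := by
    intro x hx
    rw [hm₂, Multiset.mem_map] at hx
    obtain ⟨i, hi, rfl⟩ := hx
    exact hCo i (by simpa using hi)
  have hprod₁ : m₁.prod = ∏ i ∈ Finset.range (2*h), f i := by
    rw [hm₁]; exact prod_pair_range f h
  have hprod₂ : m₂.prod = ∏ i ∈ Finset.range (2*h), f i := by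
    have e1 : m₂.prod = ∏ i ∈ Finset.range h, (f (2*i+2) * f (2*i+1)) := rfl
    have e2 : ∏ i ∈ Finset.range h, (f (2*i+2) * f (2*i+1))
        = ∏ i ∈ Finset.range (2*h), f (i+1) := by
      have := prod_pair_range (fun i => f (i+1)) h
      simpa [mul_comm, show ∀ i, 2*i+1+1 = 2*i+2 from fun i => rfl] using this
    have hne : f 0 ≠ 0 := by
      rw [f0]; exact (hP v hv).pos.ne'
    have e3 : (∏ i ∈ Finset.range (2*h), f (i+1)) * f 0
        = (∏ i ∈ Finset.range (2*h), f i) * f 0 := by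
      rw [← Finset.prod_range_succ', Finset.prod_range_succ, f2h, f0]
    rw [e1, e2]
    exact Nat.eq_of_mul_eq_mul_right (Nat.pos_of_ne_zero hne) e3
  have hmeq : m₁ = m₂ :=
    hSidon (∏ i ∈ Finset.range (2*h), f i) m₁ m₂ hcard₁ hmem₁ hprod₁ hcard₂ hmem₂ hprod₂
  -- f 0 * f 1 ∈ m₂
  have h01 : f 0 * f 1 ∈ m₂ := by
    rw [← hmeq, hm₁, Multiset.mem_map]
    exact ⟨0, by simpa using by omega, by norm_num⟩
  rw [hm₂, Multiset.mem_map] at h01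
  obtain ⟨j, hj, hje⟩ := h01
  have hjh : j < h := by simpa using hj
  -- factor uniqueness
  have hf0P : f 0 ∈ P := f0 ▸ hv
  have hf1Q : f 1 ∈ Q := (hPar 1 (by omega)).2 (by simp)
  have hjP : f (2*j+2) ∈ P := (hPar (2*j+2) (by omega)).1 ⟨j+1, by ring⟩
  have hjQ : f (2*j+1) ∈ Q := (hPar (2*j+1) (by omega)).2 (by simp [Nat.even_add_one, parity_simps])
  obtain ⟨e1, e2⟩ := prime_mul_eq hP hQ hPQ hf0P hjP hf1Q hjQ hje.symm
  -- injectivity of f on [1, 2h]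
  have hinj : ∀ i j, 1 ≤ i → i ≤ 2*h → 1 ≤ j → j ≤ 2*h → f i = f j → i = j := by
    intro a b ha ha' hb hb' heq
    have hnd := hcyc.2
    have hsup : ∀ k, 1 ≤ k → k ≤ 2*h → w.support.tail[k-1]? = some (f k) := by
      intro k hk hk'
      have := walk_support_getElem? w k (by omega)
      rw [w.support_eq_cons] at this
      obtain ⟨k', rfl⟩ : ∃ k', k = k' + 1 := ⟨k - 1, by omega⟩
      rw [List.getElem?_cons_succ] at this
      simpa using this
    have hls : w.support.length = w.length + 1 := w.length_support
    have hlt : a - 1 < w.support.tail.length := by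
      rw [List.length_tail, hls]; omega
    have hab : a - 1 = b - 1 := (List.getElem?_inj hlt hnd).mp
      ((hsup a ha ha').trans (by rw [heq, hsup b hb hb']))
    omega
  have h2j : 2*j+2 = 2*h := by
    apply hinj (2*j+2) (2*h) (by omega) (by omega) (by omega) (by omega)
    rw [← e1, f0, ← f2h]
  have : (1 : ℕ) = 2*j+1 := hinj 1 (2*j+1) (by omega) (by omega) (by omega) (by omega) e2
  omega


/-- let `P, Q` be disjoint finite sets of primes and
`C ⊆ {pq : p ∈ P, q ∈ Q}` a `B_h^×[1]` set (every integer has at most one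
representation, up to ordering, as a product of `h` elements of `C`). Then the
bipartite graph on `P ∪ Q`, joining `p ∈ P` to `q ∈ Q` whenever `pq ∈ C`,
contains no cycle of length `2h`. -/
theorem stmt12 (h : ℕ) (hh : 2 ≤ h) (P Q : Finset ℕ)
    (hP : ∀ p ∈ P, Nat.Prime p) (hQ : ∀ q ∈ Q, Nat.Prime q) (hPQ : Disjoint P Q)
    (C : Finset ℕ) (hC : ∀ c ∈ C, ∃ p ∈ P, ∃ q ∈ Q, c = p * q)
    (hSidon : ∀ n : ℕ, ∀ m₁ m₂ : Multiset ℕ,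
      Multiset.card m₁ = h → (∀ x ∈ m₁, x ∈ C) → m₁.prod = n →
      Multiset.card m₂ = h → (∀ x ∈ m₂, x ∈ C) → m₂.prod = n → m₁ = m₂)
    (G : SimpleGraph ℕ)
    (hG : ∀ a b : ℕ, G.Adj a b ↔
      (a ∈ P ∧ b ∈ Q ∧ a * b ∈ C) ∨ (b ∈ P ∧ a ∈ Q ∧ b * a ∈ C)) :
    ¬ ∃ (v : ℕ) (w : G.Walk v v), w.IsCycle ∧ w.length = 2 * h := by
  rintro ⟨v, w, hcyc, hlen⟩
  have hadj := w.adj_getVert_succ (i := 0) (by omega)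
  rw [w.getVert_zero, hG] at hadj
  rcases hadj with ⟨h1, _, _⟩ | ⟨_, h1, _⟩
  · exact key h hh P Q hP hQ hPQ C hSidon G hG v w hcyc hlen h1
  · refine key h hh Q P hQ hP hPQ.symm C hSidon G ?_ v w hcyc hlen h1
    intro a b
    rw [hG]
    constructor
    · rintro (⟨h1, h2, h3⟩ | ⟨h1, h2, h3⟩)
      · exact Or.inr ⟨h2, h1, by rwa [mul_comm]⟩
      · exact Or.inl ⟨h2, h1, by rwa [mul_comm]⟩
    · rintro (⟨h1, h2, h3⟩ | ⟨h1, h2, h3⟩)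
      · exact Or.inr ⟨h2, h1, by rwa [mul_comm]⟩
      · exact Or.inl ⟨h2, h1, by rwa [mul_comm]⟩
end

section
/- For every natural number M ≥ 2N with N ≥ 1, there exist finite sets X, Y ⊂ ℚ with |Y| = N, |X| ≥ M, |X| ≥ |Y|, such that the number of quadruples (x_1, x_2, y_1, y_2) ∈ X × X × Y × Y with (x_1 - y_1)(x_2 - y_2) = 1 is at least c · |X| · |Y| for an absolute constant c > 0. -/
open Finset

/-- there is an absolute constant `c > 0` such that for all `N ≥ 1` and
`M ≥ 2N` there exist finite `X, Y ⊆ ℚ` with `|Y| = N`, `|X| ≥ M`, `|X| ≥ |Y|`, and the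
number of quadruples `(x₁,x₂,y₁,y₂) ∈ X²×Y²` with `(x₁-y₁)(x₂-y₂) = 1` is at least
`c·|X|·|Y|`. -/
theorem stmt13 : ∃ c : ℝ, 0 < c ∧ ∀ N M : ℕ, 1 ≤ N → 2 * N ≤ M →
    ∃ X Y : Finset ℚ, Y.card = N ∧ M ≤ X.card ∧ Y.card ≤ X.card ∧
      c * X.card * Y.card ≤
        ((((X ×ˢ X) ×ˢ (Y ×ˢ Y)).filter
          fun p => (p.1.1 - p.2.1) * (p.1.2 - p.2.2) = 1).card : ℝ) := by
  refine ⟨1/4, by norm_num, fun N M hN hM => ?_⟩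
  set Y : Finset ℚ := (Finset.Icc 1 N).image (Nat.cast) with hYdef
  set Z : Finset ℚ := (Finset.Icc 1 M).image (Nat.cast) with hZdef
  set R : Finset ℚ :=
    ((Finset.Icc 1 M) ×ˢ (Finset.Icc 1 N)).image
      (fun p : ℕ × ℕ => (p.2 : ℚ) + 1 / (p.1 : ℚ)) with hRdef
  set X : Finset ℚ := Z ∪ R with hXdef
  have hNM : N ≤ M := by omega
  have hcastinj : Function.Injective (Nat.cast : ℕ → ℚ) := Nat.cast_injective
  have hYcard : Y.card = N := by
    rw [hYdef, Finset.card_image_of_injective _ hcastinj, Nat.card_Icc]; omega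
  have hZcard : Z.card = M := by
    rw [hZdef, Finset.card_image_of_injective _ hcastinj, Nat.card_Icc]; omega
  have hXge : M ≤ X.card := by
    calc M = Z.card := hZcard.symm
    _ ≤ X.card := Finset.card_le_card (Finset.subset_union_left)
  have hXle : X.card ≤ M + M * N := by
    calc X.card ≤ Z.card + R.card := Finset.card_union_le _ _
    _ ≤ M + M * N := by
        refine Nat.add_le_add hZcard.le ?_
        calc R.card ≤ ((Finset.Icc 1 M) ×ˢ (Finset.Icc 1 N)).card :=
              Finset.card_image_le
        _ = M * N := by simp [Nat.card_Icc]
  refine ⟨X, Y, hYcard, hXge, by omega, ?_⟩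
  -- the set of triples (l, y1, y2)
  set S : Finset (ℕ × ℕ × ℕ) :=
    (Finset.Icc 1 (M - N)) ×ˢ ((Finset.Icc 1 N) ×ˢ (Finset.Icc 1 N)) with hSdef
  set T := (((X ×ˢ X) ×ˢ (Y ×ˢ Y)).filter
          fun p : (ℚ × ℚ) × ℚ × ℚ => (p.1.1 - p.2.1) * (p.1.2 - p.2.2) = 1) with hTdef
  have hST : S.card ≤ T.card := by
    apply Finset.card_le_card_of_injOn
      (fun t => (((t.2.1 : ℚ) + t.1, (t.2.2 : ℚ) + 1 / t.1), ((t.2.1 : ℚ), (t.2.2 : ℚ))))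
    · rintro ⟨l, y1, y2⟩ ht
      simp only [hSdef, Finset.mem_coe, Finset.mem_product, Finset.mem_Icc] at ht
      obtain ⟨⟨hl1, hl2⟩, ⟨hy11, hy12⟩, hy21, hy22⟩ := ht
      have hlpos : (0 : ℚ) < l := by exact_mod_cast hl1
      simp only [hTdef, Finset.mem_coe, Finset.mem_filter, Finset.mem_product]
      refine ⟨⟨⟨?_, ?_⟩, ?_, ?_⟩, ?_⟩
      · apply Finset.mem_union_left
        rw [hZdef]
        apply Finset.mem_image.2
        exact ⟨y1 + l, by simp [Finset.mem_Icc]; omega, by push_cast; ring⟩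
      · apply Finset.mem_union_right
        rw [hRdef]
        apply Finset.mem_image.2
        exact ⟨(l, y2), by simp [Finset.mem_Icc]; omega, rfl⟩
      · exact Finset.mem_image.2 ⟨y1, by simp [Finset.mem_Icc]; omega, rfl⟩
      · exact Finset.mem_image.2 ⟨y2, by simp [Finset.mem_Icc]; omega, rfl⟩
      · field_simp; ring
    · rintro ⟨l, y1, y2⟩ h1 ⟨l', y1', y2'⟩ h2 heq
      simp only [Prod.mk.injEq] at heq
      obtain ⟨⟨h3, h4⟩, h5, h6⟩ := heq
      have hy1 : y1 = y1' := by exact_mod_cast h5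
      have hy2 : y2 = y2' := by exact_mod_cast h6
      have hl : l = l' := by
        have : (l : ℚ) = l' := by
          have := h3
          rw [h5] at this
          linarith
        exact_mod_cast this
      simp [hy1, hy2, hl]
  have hScard : S.card = (M - N) * (N * N) := by
    simp [hSdef, Nat.card_Icc]
  -- final arithmetic
  have key : X.card * N ≤ 4 * T.card := by
    calc X.card * N ≤ (M + M * N) * N := Nat.mul_le_mul_right _ hXle
    _ ≤ 4 * ((M - N) * (N * N)) := by
        obtain ⟨K, hK⟩ : ∃ K, M = K + N := ⟨M - N, by omega⟩
        subst hK
        have hKN : N ≤ K := by omega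
        have : K + N - N = K := by omega
        rw [this]
        nlinarith
    _ = 4 * S.card := by rw [hScard]
    _ ≤ 4 * T.card := Nat.mul_le_mul_left _ hST
  rw [hYcard]
  have : ((X.card * N : ℕ) : ℝ) ≤ ((4 * T.card : ℕ) : ℝ) := by exact_mod_cast key
  push_cast at this
  linarith
end

section
/- Let N be a natural number, g, h natural numbers with h ≥ 2, and let A_{N,N} = {(2i+1)·2^j : 1 ≤ i ≤ N, 1 ≤ j ≤ N}. Then any subset C ⊆ A_{N,N} such that every integer has at most g representations (up to ordering) as a product of h elements of C satisfies |C|^h ≤ g · h! · h · N^{h+1}. -/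
open Finset

lemma exists_perm_comp_of_ofFn_eq {h : ℕ} {a b : Fin h → ℕ}
    (hab : (List.ofFn a : Multiset ℕ) = (List.ofFn b : Multiset ℕ)) :
    ∃ σ : Equiv.Perm (Fin h), a = b ∘ σ := by
  have hperm : (List.ofFn a).Perm (List.ofFn b) := Multiset.coe_eq_coe.mp hab
  have h1 : (List.ofFn (a ∘ Tuple.sort a)).Perm (List.ofFn (b ∘ Tuple.sort b)) :=
    ((Tuple.sort a).ofFn_comp_perm a).trans
      (hperm.trans ((Tuple.sort b).ofFn_comp_perm b).symm)
  have h2 : a ∘ Tuple.sort a = b ∘ Tuple.sort b :=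
    List.ofFn_injective (List.Perm.eq_of_sortedLE
      (Tuple.monotone_sort a).sortedLE_ofFn (Tuple.monotone_sort b).sortedLE_ofFn h1)
  refine ⟨(Tuple.sort a).symm.trans (Tuple.sort b), ?_⟩
  funext i
  have := congrFun h2 ((Tuple.sort a).symm i)
  simpa using this

/-- for `A_{N,N} = {(2i+1)·2^j : 1 ≤ i,j ≤ N}`, any `B_h^×[g]` subset
`C ⊆ A_{N,N}` (every integer has at most `g` representations, up to ordering, as a
product of `h` elements of `C`) satisfies `|C|^h ≤ g·h!·h·N^{h+1}`. -/
theorem stmt15 (N g h : ℕ) (hh : 2 ≤ h)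
    (C : Finset ℕ)
    (hC : C ⊆ (Finset.Icc 1 N ×ˢ Finset.Icc 1 N).image
      fun p : ℕ × ℕ => (2 * p.1 + 1) * 2 ^ p.2)
    (hSidon : ∀ n : ℕ,
      ({m : Multiset ℕ | Multiset.card m = h ∧ (∀ x ∈ m, x ∈ C) ∧ m.prod = n}).ncard ≤ g) :
    C.card ^ h ≤ g * Nat.factorial h * h * N ^ (h + 1) := by
  classical
  set s : Finset (Fin h → ℕ) := Fintype.piFinset (fun _ => C) with hs
  have hscard : s.card = C.card ^ h := by
    simp [hs, Fintype.card_piFinset_const]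
  set f : (Fin h → ℕ) → ℕ := fun a => ∏ i, a i with hf
  set t : Finset ℕ := s.image f with ht
  -- Step 1: fibers of f over s have size ≤ h! * g
  have step1 : s.card ≤ (Nat.factorial h * g) * t.card := by
    refine Finset.card_le_mul_card_image s _ (fun n hn => ?_)
    set F : Finset (Fin h → ℕ) := s.filter (fun a => f a = n) with hF
    set φ : (Fin h → ℕ) → Multiset ℕ := fun a => (List.ofFn a : Multiset ℕ) with hφ
    have hfib : ∀ m ∈ F.image φ, (F.filter (fun a => φ a = m)).card ≤ Nat.factorial h := by
      intro m hm
      obtain ⟨a₀, ha₀F, ha₀⟩ := Finset.mem_image.mp hm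
      have : (F.filter (fun a => φ a = m)).card ≤ (Finset.univ : Finset (Equiv.Perm (Fin h))).card := by
        refine Finset.card_le_card_of_surjOn (fun σ => a₀ ∘ σ) ?_
        intro a ha
        simp only [Finset.coe_filter, Set.mem_setOf_eq] at ha
        obtain ⟨σ, hσ⟩ := exists_perm_comp_of_ofFn_eq (a := a) (b := a₀)
          (ha.2.trans ha₀.symm)
        exact ⟨σ, by simp, hσ.symm⟩
      simpa [Fintype.card_perm] using this
    have himg : (F.image φ).card ≤ g := by
      set S : Set (Multiset ℕ) :=
        {m : Multiset ℕ | Multiset.card m = h ∧ (∀ x ∈ m, x ∈ C) ∧ m.prod = n} with hS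
      have hsub : ↑(F.image φ) ⊆ S := by
        intro m hm
        simp only [Finset.coe_image, Set.mem_image, Finset.mem_coe] at hm
        obtain ⟨a, haF, rfl⟩ := hm
        rw [hF, Finset.mem_filter] at haF
        obtain ⟨haS, hfa⟩ := haF
        rw [hs, Fintype.mem_piFinset] at haS
        refine ⟨by simp [hφ], ?_, ?_⟩
        · intro x hx
          rw [hφ] at hx
          simp only [Multiset.mem_coe, List.mem_ofFn] at hx
          obtain ⟨i, rfl⟩ := hx
          exact haS i
        · rw [hφ]
          rw [Multiset.prod_coe, List.prod_ofFn]
          exact hfa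
      have hfin : S.Finite := by
        apply Set.Finite.subset (((h • C.val).powerset).toFinset.finite_toSet)
        intro m hm
        rw [Finset.mem_coe, Multiset.mem_toFinset, Multiset.mem_powerset, Multiset.le_iff_count]
        intro x
        by_cases hx : x ∈ m
        · have h1 : Multiset.count x m ≤ h := by
            rw [← hm.1]; exact Multiset.count_le_card x m
          have h3 : Multiset.count x C.val = 1 :=
            Multiset.count_eq_one_of_mem C.nodup (hm.2.1 x hx)
          have h2 : Multiset.count x (h • C.val) = h := by
            simp [Multiset.count_nsmul, h3]
          omega
        · simp [Multiset.count_eq_zero_of_notMem hx]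
      calc (F.image φ).card = (↑(F.image φ) : Set (Multiset ℕ)).ncard := by
            rw [Set.ncard_coe_finset]
        _ ≤ S.ncard := Set.ncard_le_ncard hsub hfin
        _ ≤ g := hSidon n
    calc F.card ≤ Nat.factorial h * (F.image φ).card :=
          Finset.card_le_mul_card_image F _ hfib
      _ ≤ Nat.factorial h * g := Nat.mul_le_mul_left _ himg
  -- Step 2: the product set is small
  have step2 : t.card ≤ N ^ h * (h * N + 1 - h) := by
    set T : Finset ℕ := ((Fintype.piFinset (fun _ : Fin h => Finset.Icc 1 N)) ×ˢ
      Finset.Icc h (h * N)).image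
      (fun pj : (Fin h → ℕ) × ℕ => (∏ i, (2 * pj.1 i + 1)) * 2 ^ pj.2) with hT
    have hsub : t ⊆ T := by
      intro n hn
      rw [ht, Finset.mem_image] at hn
      obtain ⟨a, haS, rfl⟩ := hn
      rw [hs, Fintype.mem_piFinset] at haS
      have : ∀ i, ∃ p : ℕ × ℕ, (p.1 ∈ Finset.Icc 1 N ∧ p.2 ∈ Finset.Icc 1 N) ∧
          (2 * p.1 + 1) * 2 ^ p.2 = a i := by
        intro i
        have := hC (haS i)
        rw [Finset.mem_image] at this
        obtain ⟨p, hp, hpe⟩ := this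
        rw [Finset.mem_product] at hp
        exact ⟨p, hp, hpe⟩
      choose p hp hpe using this
      rw [hT, Finset.mem_image]
      refine ⟨(fun i => (p i).1, ∑ i, (p i).2), ?_, ?_⟩
      · rw [Finset.mem_product]
        constructor
        · rw [Fintype.mem_piFinset]
          exact fun i => (hp i).1
        · rw [Finset.mem_Icc]
          constructor
          · calc h = ∑ _i : Fin h, 1 := by simp
              _ ≤ ∑ i, (p i).2 := Finset.sum_le_sum
                  (fun i _ => (Finset.mem_Icc.mp (hp i).2).1)
          · calc ∑ i, (p i).2 ≤ ∑ _i : Fin h, N := Finset.sum_le_sum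
                  (fun i _ => (Finset.mem_Icc.mp (hp i).2).2)
              _ = h * N := by simp [mul_comm]
      · simp only [hf]
        rw [← Finset.prod_pow_eq_pow_sum, ← Finset.prod_mul_distrib]
        exact Finset.prod_congr rfl (fun i _ => hpe i)
    calc t.card ≤ T.card := Finset.card_le_card hsub
      _ ≤ ((Fintype.piFinset (fun _ : Fin h => Finset.Icc 1 N)) ×ˢ
            Finset.Icc h (h * N)).card := Finset.card_image_le
      _ = N ^ h * (h * N + 1 - h) := by
          rw [Finset.card_product, Fintype.card_piFinset_const]
          simp [Nat.card_Icc]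
  -- combine
  have harith : N ^ h * (h * N + 1 - h) ≤ h * N ^ (h + 1) := by
    rcases Nat.eq_zero_or_pos N with rfl | hN
    · have h0 : h * 0 + 1 - h = 0 := by omega
      simp [h0]
      omega
    · have h1 : h * N + 1 - h ≤ h * N := by
        have : h ≤ h * N := Nat.le_mul_of_pos_right _ hN
        omega
      calc N ^ h * (h * N + 1 - h) ≤ N ^ h * (h * N) := Nat.mul_le_mul_left _ h1
        _ = h * N ^ (h + 1) := by ring
  calc C.card ^ h = s.card := hscard.symm
    _ ≤ (Nat.factorial h * g) * t.card := step1
    _ ≤ (Nat.factorial h * g) * (N ^ h * (h * N + 1 - h)) := Nat.mul_le_mul_left _ step2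
    _ ≤ (Nat.factorial h * g) * (h * N ^ (h + 1)) := Nat.mul_le_mul_left _ harith
    _ = g * Nat.factorial h * h * N ^ (h + 1) := by ring
end
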